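/- A pair (X,Y) is a ⟨U,U⟩-model of P if and only if (X,Y) is an SE-model of P, i.e., X ⊆ Y, Y ⊨ P, and X ⊨ P^Y. Consequently, ⟨U,U⟩-equivalence coincides with strong equivalence characterized by equality of SE-models. -/
import Mathlib


structure Rule (α : Type*) where
  head : Finset α
  pbody : Finset α
  nbody : Finset α
deriving DecidableEq

abbrev Program (α : Type*) := Finset (Rule α)

variable {α : Type*} [DecidableEq α]

/-- An interpretation `Y` satisfies a rule. -/
def satRule (Y : Finset α) (r : Rule α) : Prop :=
  r.pbody ⊆ Y → r.nbody ∩ Y = ∅ → (r.head ∩ Y).Nonempty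

/-- `Y` is a model of the program `P`. -/
def satProg (Y : Finset α) (P : Program α) : Prop := ∀ r ∈ P, satRule Y r

/-- The Gelfond–Lifschitz reduct `P^Y`. -/
def reduct (P : Program α) (Y : Finset α) : Program α :=
  (P.filter (fun r => r.nbody ∩ Y = ∅)).image (fun r => ⟨r.head, r.pbody, ∅⟩)

/-- `Y` is an answer set of `P`: a minimal model of `P^Y`. -/
def isAS (P : Program α) (Y : Finset α) : Prop :=
  satProg Y (reduct P Y) ∧ ∀ Z, Z ⊂ Y → ¬ satProg Z (reduct P Y)

def heads (P : Program α) : Finset α := P.biUnion Rule.head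
def bodies (P : Program α) : Finset α := P.biUnion (fun r => r.pbody ∪ r.nbody)

/-- A positive program: no default negation. -/
def Positive (P : Program α) : Prop := ∀ r ∈ P, r.nbody = ∅

/-- A unary program: only facts `a ←` and rules `a ← b`. -/
def Unary (P : Program α) : Prop :=
  ∀ r ∈ P, r.nbody = ∅ ∧ r.head.card = 1 ∧ r.pbody.card ≤ 1

/-- Membership in the class `C_⟨H,B⟩`. -/
def inClass (H B : Finset α) (P : Program α) : Prop := heads P ⊆ H ∧ bodies P ⊆ B

/-- `V ⪯_H^B Z`. -/
def preceq (H B V Z : Finset α) : Prop := V ∩ H ⊆ Z ∩ H ∧ Z ∩ B ⊆ V ∩ B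

/-- `V ≺_H^B Z`. -/
def prec (H B V Z : Finset α) : Prop := preceq H B V Z ∧ V ∩ (H ∪ B) ≠ Z ∩ (H ∪ B)

/-- `Y` is an `H`-total model of `P`. -/
def Htotal (H : Finset α) (P : Program α) (Y : Finset α) : Prop :=
  satProg Y P ∧ ∀ Z, Z ⊂ Y → satProg Z (reduct P Y) → Z ∩ H ⊂ Y ∩ H

/-- The containment `P ⊆_⟨H,B⟩ Q`. -/
def containsHB (H B : Finset α) (P Q : Program α) : Prop :=
  ∀ R : Program α, inClass H B R → ∀ Y, isAS (P ∪ R) Y → isAS (Q ∪ R) Y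

/-- The equivalence `P ≡_⟨H,B⟩ Q`. -/
def equivHB (H B : Finset α) (P Q : Program α) : Prop :=
  ∀ R : Program α, inClass H B R → ∀ Y, isAS (P ∪ R) Y ↔ isAS (Q ∪ R) Y

/-- A witness against `P ⊆_⟨H,B⟩ Q`. -/
def Witness (H B : Finset α) (P Q : Program α) (X Y : Finset α) : Prop :=
  X ⊆ Y ∧ Htotal H P Y ∧
    (satProg Y Q → X ⊂ Y ∧ satProg X (reduct Q Y) ∧
      ∀ X', preceq H B X X' → X' ⊂ Y → ¬ satProg X' (reduct P Y))

/-- `(X,Y)` is `⪯_H^B`-maximal for `P`. -/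
def maximalHB (H B : Finset α) (P : Program α) (X Y : Finset α) : Prop :=
  satProg X (reduct P Y) ∧ ∀ X', prec H B X X' → X' ⊂ Y → ¬ satProg X' (reduct P Y)

/-- `(X,Y)` is an `⟨H,B⟩`-model of `P`. -/
def HBmodel (H B : Finset α) (P : Program α) (X Y : Finset α) : Prop :=
  X ⊆ Y ∧ Htotal H P Y ∧
    (X ⊂ Y → ∃ X', X' ⊂ Y ∧ X' ∩ (H ∪ B) = X ∧ maximalHB H B P X' Y)

lemma singleton_inter_nonempty {a : α} {Z : Finset α} :
    ({a} ∩ Z).Nonempty ↔ a ∈ Z := by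
  constructor
  · rintro ⟨x, hx⟩
    rw [Finset.mem_inter, Finset.mem_singleton] at hx
    exact hx.1 ▸ hx.2
  · intro h
    exact ⟨a, Finset.mem_inter.mpr ⟨Finset.mem_singleton_self _, h⟩⟩

lemma satProg_union' {Z : Finset α} {P Q : Program α} :
    satProg Z (P ∪ Q) ↔ satProg Z P ∧ satProg Z Q := by
  unfold satProg
  constructor
  · exact fun h => ⟨fun r hr => h r (Finset.mem_union_left _ hr),
      fun r hr => h r (Finset.mem_union_right _ hr)⟩
  · rintro ⟨h1, h2⟩ r hr
    rcases Finset.mem_union.mp hr with h | h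
    exacts [h1 r h, h2 r h]

lemma reduct_union' {Y : Finset α} {P Q : Program α} :
    reduct (P ∪ Q) Y = reduct P Y ∪ reduct Q Y := by
  unfold reduct
  rw [Finset.filter_union, Finset.image_union]

lemma satProg_reduct_iff {Z Y : Finset α} {P : Program α} :
    satProg Z (reduct P Y) ↔
      ∀ r ∈ P, r.nbody ∩ Y = ∅ → r.pbody ⊆ Z → (r.head ∩ Z).Nonempty := by
  unfold satProg reduct satRule
  constructor
  · intro h r hr hn hp
    have hm : (⟨r.head, r.pbody, ∅⟩ : Rule α) ∈
        (P.filter (fun r => r.nbody ∩ Y = ∅)).image (fun r => (⟨r.head, r.pbody, ∅⟩ : Rule α)) :=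
      Finset.mem_image_of_mem _ (Finset.mem_filter.mpr ⟨hr, hn⟩)
    exact h ⟨r.head, r.pbody, ∅⟩ hm hp (by simp)
  · intro h s hs
    simp only [Finset.mem_image, Finset.mem_filter] at hs
    obtain ⟨r, ⟨hr, hn⟩, rfl⟩ := hs
    intro hp _
    exact h r hr hn hp

lemma sat_reduct_self {Y : Finset α} {P : Program α} :
    satProg Y (reduct P Y) ↔ satProg Y P := by
  rw [satProg_reduct_iff]
  unfold satProg satRule
  exact ⟨fun h r hr hp hn => h r hr hn hp, fun h r hr hn hp => h r hr hp hn⟩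

lemma positive_reduct {Y Z : Finset α} {R : Program α} (hpos : Positive R) :
    satProg Z (reduct R Y) ↔ satProg Z R := by
  rw [satProg_reduct_iff]
  unfold satProg satRule
  constructor
  · intro h r hr hp _
    exact h r hr (by rw [hpos r hr]; simp) hp
  · intro h r hr _ hp
    exact h r hr hp (by rw [hpos r hr]; simp)

theorem UU_models_are_SE_models [Fintype α] (P Q : Program α) :
    (∀ X Y : Finset α,
      HBmodel (Finset.univ : Finset α) (Finset.univ : Finset α) P X Y ↔
        X ⊆ Y ∧ satProg Y P ∧ satProg X (reduct P Y)) ∧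
    (equivHB (Finset.univ : Finset α) (Finset.univ : Finset α) P Q ↔
      ∀ X Y : Finset α,
        (X ⊆ Y ∧ satProg Y P ∧ satProg X (reduct P Y)) ↔
        (X ⊆ Y ∧ satProg Y Q ∧ satProg X (reduct Q Y))) := by

  constructor
  · -- Part 1
    intro X Y
    constructor
    · rintro ⟨hXY, ⟨hYP, _⟩, hex⟩
      refine ⟨hXY, hYP, ?_⟩
      rcases eq_or_ne X Y with rfl | hne
      · exact sat_reduct_self.mpr hYP
      · obtain ⟨X', _, hX'eq, hsat, _⟩ :=
          hex (Finset.ssubset_iff_subset_ne.mpr ⟨hXY, hne⟩)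
        have hXX' : X' = X := by simpa using hX'eq
        exact hXX' ▸ hsat
    · rintro ⟨hXY, hYP, hXred⟩
      refine ⟨hXY, ⟨hYP, fun Z hZ _ => by simpa using hZ⟩,
        fun hss => ⟨X, hss, by simp, hXred, ?_⟩⟩
      rintro X' ⟨⟨h1, h2⟩, hne⟩ _ _
      simp only [Finset.inter_univ, Finset.union_self] at h1 h2 hne
      exact hne (Finset.Subset.antisymm h1 h2)
  · -- Part 2
    have key : ∀ P' Q' : Program α, equivHB Finset.univ Finset.univ P' Q' →
        ∀ X Y : Finset α, X ⊆ Y → satProg Y P' → satProg X (reduct P' Y) →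
          satProg Y Q' ∧ satProg X (reduct Q' Y) := by
      intro P' Q' heq X Y hXY hYP hXP
      have hYQ : satProg Y Q' := by
        set R1 : Program α := Y.image (fun a => (⟨{a}, ∅, ∅⟩ : Rule α)) with hR1
        have hR1pos : Positive R1 := by
          intro r hr
          simp only [hR1, Finset.mem_image] at hr
          obtain ⟨a, _, rfl⟩ := hr; rfl
        have hZR1 : ∀ Z : Finset α, satProg Z R1 ↔ Y ⊆ Z := by
          intro Z
          constructor
          · intro h a ha
            have := h ⟨{a}, ∅, ∅⟩ (Finset.mem_image_of_mem _ ha) (by simp) (by simp)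
            exact singleton_inter_nonempty.mp this
          · intro hYZ r hr
            simp only [hR1, Finset.mem_image] at hr
            obtain ⟨a, ha, rfl⟩ := hr
            intro _ _
            exact singleton_inter_nonempty.mpr (hYZ ha)
        have hAS : isAS (P' ∪ R1) Y := by
          constructor
          · rw [reduct_union', satProg_union']
            exact ⟨sat_reduct_self.mpr hYP,
              (positive_reduct hR1pos).mpr ((hZR1 Y).mpr (Finset.Subset.refl _))⟩
          · intro Z hZ hsat
            rw [reduct_union', satProg_union'] at hsat
            have hYZ := (hZR1 Z).mp ((positive_reduct hR1pos).mp hsat.2)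
            exact (Finset.ssubset_def.mp hZ).2 hYZ
        have hQ := ((heq R1 ⟨Finset.subset_univ _, Finset.subset_univ _⟩ Y).mp hAS).1
        rw [reduct_union', satProg_union', sat_reduct_self] at hQ
        exact hQ.1
      refine ⟨hYQ, ?_⟩
      by_contra hnot
      have hXne : X ≠ Y := fun h => hnot (by rw [h]; exact sat_reduct_self.mpr hYQ)
      have hXss : X ⊂ Y := Finset.ssubset_iff_subset_ne.mpr ⟨hXY, hXne⟩
      set D := Y \ X with hD
      set R2 : Program α := X.image (fun a => (⟨{a}, ∅, ∅⟩ : Rule α)) ∪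
          (D ×ˢ D).image (fun p => (⟨{p.1}, {p.2}, ∅⟩ : Rule α)) with hR2
      have hR2pos : Positive R2 := by
        intro r hr
        simp only [hR2, Finset.mem_union, Finset.mem_image] at hr
        rcases hr with ⟨a, _, rfl⟩ | ⟨p, _, rfl⟩ <;> rfl
      have hXR2 : satProg X R2 := by
        intro r hr
        simp only [hR2, Finset.mem_union, Finset.mem_image] at hr
        rcases hr with ⟨a, ha, rfl⟩ | ⟨p, hp, rfl⟩
        · intro _ _; exact singleton_inter_nonempty.mpr ha
        · intro hb _
          exfalso
          simp only [Finset.mem_product] at hp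
          have h2 : p.2 ∈ X := hb (Finset.mem_singleton_self _)
          exact (Finset.mem_sdiff.mp hp.2).2 h2
      have hYR2 : satProg Y R2 := by
        intro r hr
        simp only [hR2, Finset.mem_union, Finset.mem_image] at hr
        rcases hr with ⟨a, ha, rfl⟩ | ⟨p, hp, rfl⟩
        · intro _ _; exact singleton_inter_nonempty.mpr (hXY ha)
        · intro _ _
          simp only [Finset.mem_product] at hp
          exact singleton_inter_nonempty.mpr (Finset.mem_sdiff.mp hp.1).1
      have hZR2 : ∀ Z, Z ⊆ Y → satProg Z R2 → Z = X ∨ Y ⊆ Z := by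
        intro Z hZY hZ
        have hXZ : X ⊆ Z := by
          intro a ha
          have := hZ ⟨{a}, ∅, ∅⟩
            (Finset.mem_union_left _ (Finset.mem_image_of_mem _ ha)) (by simp) (by simp)
          exact singleton_inter_nonempty.mp this
        by_cases hDZ : ∃ b ∈ D, b ∈ Z
        · right
          obtain ⟨b, hbD, hbZ⟩ := hDZ
          intro a haY
          by_cases haX : a ∈ X
          · exact hXZ haX
          · have haD : a ∈ D := Finset.mem_sdiff.mpr ⟨haY, haX⟩
            have hmem : ((a, b) : α × α) ∈ D ×ˢ D := Finset.mem_product.mpr ⟨haD, hbD⟩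
            have := hZ ⟨{a}, {b}, ∅⟩
              (Finset.mem_union_right _ (Finset.mem_image_of_mem _ hmem))
              (by intro x hx; rwa [Finset.mem_singleton.mp hx]) (by simp)
            exact singleton_inter_nonempty.mp this
        · left
          push_neg at hDZ
          refine Finset.Subset.antisymm ?_ hXZ
          intro z hz
          by_contra hzX
          exact hDZ z (Finset.mem_sdiff.mpr ⟨hZY hz, hzX⟩) hz
      have hAS : isAS (Q' ∪ R2) Y := by
        constructor
        · rw [reduct_union', satProg_union']
          exact ⟨sat_reduct_self.mpr hYQ, (positive_reduct hR2pos).mpr hYR2⟩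
        · intro Z hZ hsat
          rw [reduct_union', satProg_union'] at hsat
          have hZR := (positive_reduct hR2pos).mp hsat.2
          rcases hZR2 Z (Finset.ssubset_def.mp hZ).1 hZR with rfl | hYZ
          · exact hnot hsat.1
          · exact (Finset.ssubset_def.mp hZ).2 hYZ
      have hASP := (heq R2 ⟨Finset.subset_univ _, Finset.subset_univ _⟩ Y).mpr hAS
      apply hASP.2 X hXss
      rw [reduct_union', satProg_union']
      exact ⟨hXP, (positive_reduct hR2pos).mpr hXR2⟩
    have key2 : ∀ P' Q' : Program α,
        (∀ X Y : Finset α, X ⊆ Y → satProg Y P' → satProg X (reduct P' Y) →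
          satProg Y Q' ∧ satProg X (reduct Q' Y)) →
        (∀ X Y : Finset α, X ⊆ Y → satProg Y Q' → satProg X (reduct Q' Y) →
          satProg Y P' ∧ satProg X (reduct P' Y)) →
        ∀ R : Program α, ∀ Y, isAS (P' ∪ R) Y → isAS (Q' ∪ R) Y := by
      intro P' Q' hPQ hQP R Y hAS
      obtain ⟨hYsat, hmin⟩ := hAS
      rw [reduct_union', satProg_union'] at hYsat
      have hYP' : satProg Y P' := sat_reduct_self.mp hYsat.1
      obtain ⟨hYQ', hYQred⟩ := hPQ Y Y (Finset.Subset.refl _) hYP' hYsat.1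
      constructor
      · rw [reduct_union', satProg_union']
        exact ⟨hYQred, hYsat.2⟩
      · intro Z hZ hsat
        rw [reduct_union', satProg_union'] at hsat
        obtain ⟨_, hZP⟩ := hQP Z Y (Finset.ssubset_def.mp hZ).1 hYQ' hsat.1
        exact hmin Z hZ (by rw [reduct_union', satProg_union']; exact ⟨hZP, hsat.2⟩)
    constructor
    · intro heq X Y
      have heq' : equivHB Finset.univ Finset.univ Q P := fun R hR Y => (heq R hR Y).symm
      constructor
      · rintro ⟨h1, h2, h3⟩
        obtain ⟨h4, h5⟩ := key P Q heq X Y h1 h2 h3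
        exact ⟨h1, h4, h5⟩
      · rintro ⟨h1, h2, h3⟩
        obtain ⟨h4, h5⟩ := key Q P heq' X Y h1 h2 h3
        exact ⟨h1, h4, h5⟩
    · intro hSE R hR Y
      have d1 : ∀ X Y : Finset α, X ⊆ Y → satProg Y P → satProg X (reduct P Y) →
          satProg Y Q ∧ satProg X (reduct Q Y) := by
        intro X Y h1 h2 h3
        obtain ⟨_, h4, h5⟩ := (hSE X Y).mp ⟨h1, h2, h3⟩
        exact ⟨h4, h5⟩
      have d2 : ∀ X Y : Finset α, X ⊆ Y → satProg Y Q → satProg X (reduct Q Y) →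
          satProg Y P ∧ satProg X (reduct P Y) := by
        intro X Y h1 h2 h3
        obtain ⟨_, h4, h5⟩ := (hSE X Y).mpr ⟨h1, h2, h3⟩
        exact ⟨h4, h5⟩
      exact ⟨key2 P Q d1 d2 R Y, key2 Q P d2 d1 R Y⟩
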